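/- For any dimaze (D, B_0), the linkability system satisfies the exchange property (∗): for all linkable sets I and J with J \ I nonempty, and for every v ∈ I \ J, there exists u ∈ J \ I such that J + v − u is linkable. -/

import Mathlib

open Set

universe u

variable {V : Type*}

/-- A directed path in the digraph `D`: a nonempty duplicate-free list of vertices
with an edge between consecutive vertices. -/
structure DiPath {V : Type*} (D : V → V → Prop) where
  verts : List V
  ne : verts ≠ []
  nodup : verts.Nodup
  chain : verts.Chain' D

namespace DiPath

variable {D : V → V → Prop}

/-- The initial vertex of a directed path. -/
def first (p : DiPath D) : V := p.verts.head p.ne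

/-- The terminal vertex of a directed path. -/
def last (p : DiPath D) : V := p.verts.getLast p.ne

/-- The set of vertices of a directed path. -/
def vertSet (p : DiPath D) : Set V := {v | v ∈ p.verts}

/-- The set of (directed) edges of a directed path. -/
def edgeSet (p : DiPath D) : Set (V × V) := {e | e ∈ p.verts.zip p.verts.tail}

end DiPath

/-- The set of initial vertices of a collection of paths. -/
def Ini {D : V → V → Prop} (P : Set (DiPath D)) : Set V := {v | ∃ p ∈ P, p.first = v}

/-- The set of terminal vertices of a collection of paths. -/
def Ter {D : V → V → Prop} (P : Set (DiPath D)) : Set V := {v | ∃ p ∈ P, p.last = v}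

/-- All vertices used by a collection of paths. -/
def LinkVerts {D : V → V → Prop} (P : Set (DiPath D)) : Set V := ⋃ p ∈ P, p.vertSet

/-- All edges used by a collection of paths. -/
def LinkEdges {D : V → V → Prop} (P : Set (DiPath D)) : Set (V × V) := ⋃ p ∈ P, p.edgeSet

/-- A linkage in the dimaze `(D, B0)`: a set of pairwise vertex-disjoint directed
paths, each ending in `B0`. -/
def IsLinkage (D : V → V → Prop) (B0 : Set V) (P : Set (DiPath D)) : Prop :=
  (∀ p ∈ P, p.last ∈ B0) ∧
  (∀ p ∈ P, ∀ q ∈ P, p ≠ q → Disjoint p.vertSet q.vertSet)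

/-- `(D, B0)` is a dimaze: every vertex of `B0` has out-degree `0`. -/
def IsDimaze (D : V → V → Prop) (B0 : Set V) : Prop := ∀ b ∈ B0, ∀ v, ¬ D b v

/-- A set of vertices is linkable if it is the set of initial vertices of a linkage. -/
def Linkable (D : V → V → Prop) (B0 : Set V) (I : Set V) : Prop :=
  ∃ P, IsLinkage D B0 P ∧ Ini P = I

/-- A set of vertices is linkable onto `B0` if it is the set of initial vertices of
a linkage whose terminal vertices are all of `B0`. -/
def LinkableOnto (D : V → V → Prop) (B0 : Set V) (I : Set V) : Prop :=
  ∃ P, IsLinkage D B0 P ∧ Ini P = I ∧ Ter P = B0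

/-- `I` is a maximal element (w.r.t. inclusion) of the set system `Ind`. -/
def MaximalIn {α : Type*} (Ind : Set α → Prop) (I : Set α) : Prop :=
  Ind I ∧ ∀ J, Ind J → I ⊆ J → J = I

/-- The maximality axiom (IM). -/
def SatisfiesIM {α : Type*} (Ind : Set α → Prop) : Prop :=
  ∀ I X : Set α, Ind I → I ⊆ X →
    ∃ J, Ind J ∧ I ⊆ J ∧ J ⊆ X ∧ ∀ K, Ind K → K ⊆ X → J ⊆ K → K = J

/-- `Ind` is the collection of independent sets of a matroid:
axioms (I1), (I2), (I3) and (IM). -/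
def IsMatroidIndep {α : Type*} (Ind : Set α → Prop) : Prop :=
  Ind ∅ ∧
  (∀ I J : Set α, I ⊆ J → Ind J → Ind I) ∧
  (∀ I B : Set α, Ind I → ¬ MaximalIn Ind I → MaximalIn Ind B →
    ∃ x ∈ B \ I, Ind (insert x I)) ∧
  SatisfiesIM Ind

/-- The dimaze `(D, B0)` contains an alternating comb: there is an alternating ray
(given by the injective vertex sequence `f` and edge orientations `o`, with
infinitely many vertices of in-degree 2) together with a linkage of all its
in-degree-2 vertices and its first vertex onto a set of exits contained in `B0`,
by disjoint paths meeting the ray exactly at their initial vertices. -/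
def ContainsAltComb (D : V → V → Prop) (B0 : Set V) : Prop :=
  ∃ (f : ℕ → V) (o : ℕ → Bool) (P : Set (DiPath D)),
    Function.Injective f ∧
    (∀ n, if o n then D (f n) (f (n+1)) else D (f (n+1)) (f n)) ∧
    (∀ N, ∃ k ≥ N, o k = true ∧ o (k+1) = false) ∧
    IsLinkage D B0 P ∧
    Ini P = insert (f 0) {v | ∃ k, o k = true ∧ o (k+1) = false ∧ v = f (k+1)} ∧
    (∀ p ∈ P, ∀ v ∈ p.vertSet, v ∈ Set.range f → v = p.first)
namespace Exchange

variable {D : V → V → Prop}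

/-- local well-formedness of a merge datum -/
def Good (p q : DiPath D) (j k : ℕ) : Prop :=
  ∃ (hj : j < p.verts.length) (hk : k < q.verts.length), p.verts[j] = q.verts[k]

/-- merged vertex list -/
def mlist (p q : DiPath D) (j k : ℕ) : List V :=
  p.verts.take (j+1) ++ q.verts.drop (k+1)

lemma take_ne (p : DiPath D) (j : ℕ) : p.verts.take (j+1) ≠ [] := by
  simp [List.take_eq_nil_iff, p.ne]

lemma mlist_ne (p q : DiPath D) (j k : ℕ) : mlist p q j k ≠ [] := by
  intro h
  rw [mlist, List.append_eq_nil_iff] at h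
  exact take_ne p j h.1

lemma mlist_head (p q : DiPath D) (j k : ℕ) :
    (mlist p q j k).head (mlist_ne p q j k) = p.first := by
  simp only [mlist]
  rw [List.head_append, dif_neg (by simp [List.isEmpty_iff, take_ne p j])]
  simp only [DiPath.first]
  rw [List.head_eq_getElem, List.head_eq_getElem, List.getElem_take]

lemma mem_take_of_mlist {p q : DiPath D} {j k : ℕ} {x : V}
    (h : x ∈ mlist p q j k) : x ∈ p.verts.take (j+1) ∨ x ∈ q.verts.drop (k+1) := by
  simpa [mlist] using h

lemma mlist_nodup {p q : DiPath D} {j k : ℕ}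
    (hdisj : ∀ x ∈ p.verts.take (j+1), x ∉ q.verts.drop (k+1)) :
    (mlist p q j k).Nodup := by
  rw [mlist, List.nodup_append]
  exact ⟨(List.take_sublist _ _).nodup p.nodup, (List.drop_sublist _ _).nodup q.nodup, fun a ha b hb hab => hdisj a ha (hab ▸ hb)⟩

lemma mlist_chain {p q : DiPath D} {j k : ℕ} (hg : Good p q j k) :
    (mlist p q j k).Chain' D := by
  obtain ⟨hj, hk, heq⟩ := hg
  simp only [mlist]
  show List.IsChain D _
  rw [List.isChain_append]
  refine ⟨List.IsChain.take p.chain _, List.IsChain.drop q.chain _, ?_⟩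
  intro x hx y hy
  rw [List.getLast?_take] at hx
  simp only [Nat.add_eq_zero, and_false, if_false] at hx
  rw [List.head?_drop] at hy
  have hk1 : k + 1 < q.verts.length := by
    rcases Nat.lt_or_ge (k+1) q.verts.length with h | h
    · exact h
    · rw [List.getElem?_eq_none h] at hy; simp at hy
  have hy' : y = q.verts[k+1] := by
    rw [List.getElem?_eq_getElem hk1] at hy; simpa using hy.symm
  have hx' : x = p.verts[j] := by
    rw [Nat.add_sub_cancel, List.getElem?_eq_getElem hj] at hx
    simp at hx; exact hx.symm
  subst hx' hy'
  rw [heq]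
  have := List.isChain_iff_getElem.1 q.chain k (by omega)
  simpa using this

lemma mlist_last {p q : DiPath D} {j k : ℕ} (hg : Good p q j k) :
    (mlist p q j k).getLast (mlist_ne p q j k) = q.last := by
  obtain ⟨hj, hk, heq⟩ := hg
  have key : ∀ (i : ℕ) (hi : i < p.verts.length) (i' : ℕ) (hi' : i' < q.verts.length),
      i = j → i' = k → p.verts[i] = q.verts[i'] := by
    rintro i hi i' hi' rfl rfl; exact heq
  rcases Nat.lt_or_ge (k+1) q.verts.length with h | h
  · have hne : (q.verts.drop (k+1)) ≠ [] := by
      simp only [ne_eq, List.drop_eq_nil_iff]; omega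
    simp only [mlist]
    rw [List.getLast_append, dif_neg (by simp [List.isEmpty_iff, hne])]
    simp only [DiPath.last]
    rw [List.getLast_eq_getElem, List.getLast_eq_getElem, List.getElem_drop]
    congr 1
    simp only [List.length_drop]
    omega
  · have hnil : q.verts.drop (k+1) = [] := by
      simp only [List.drop_eq_nil_iff]; omega
    have h2 : mlist p q j k = p.verts.take (j+1) := by simp [mlist, hnil]
    rw [List.getLast_congr _ (take_ne p j) h2, List.getLast_eq_getElem]
    rw [List.getElem_take]
    simp only [DiPath.last, List.getLast_eq_getElem]
    exact key _ (by
      have := List.length_take (i := j+1) (l := p.verts)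
      have h3 : (p.verts.take (j+1)).length - 1 < p.verts.length := by
        simp [List.length_take]; omega
      exact h3) _ (by omega) (by simp [List.length_take]; omega) (by omega)

/-- build the merged DiPath -/
def mpath (p q : DiPath D) (j k : ℕ) (hg : Good p q j k)
    (hdisj : ∀ x ∈ p.verts.take (j+1), x ∉ q.verts.drop (k+1)) : DiPath D :=
  ⟨mlist p q j k, mlist_ne p q j k, mlist_nodup hdisj, mlist_chain hg⟩

end Exchange

namespace Exchange2

open Exchange

attribute [local instance] Classical.propDecidable

variable {D : V → V → Prop} {B0 : Set V}

lemma DiPath.ext' {p q : DiPath D} (h : p.verts = q.verts) : p = q := by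
  cases p; cases q; simpa using h

lemma head_congr {l l' : List V} (h : l = l') (h1 : l ≠ []) (h2 : l' ≠ []) :
    l.head h1 = l'.head h2 := by subst h; rfl

lemma first_mem (p : DiPath D) : p.first ∈ p.verts := by
  simp only [DiPath.first]; exact List.head_mem p.ne

/-- All ambient data for the exchange argument. -/
structure Setup (D : V → V → Prop) (B0 : Set V) where
  P : Set (DiPath D)
  Q : Set (DiPath D)
  I : Set V
  J : Set V
  v : V
  hP : IsLinkage D B0 P
  hQ : IsLinkage D B0 Q
  hPI : Ini P = I
  hQJ : Ini Q = J
  hvI : v ∈ I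
  hvJ : v ∉ J

/-- A configuration: an optional merge datum for each path, plus extra free paths. -/
structure Config (D : V → V → Prop) where
  t : DiPath D → Option (DiPath D × ℕ × ℕ)
  F : Set (DiPath D)

variable {S : Setup D B0}

/-- vertex list of the (possibly rerouted) path at `q`. -/
def mverts (c : Config D) (q : DiPath D) : List V :=
  match c.t q with
  | none => q.verts
  | some (p, j, k) => mlist p q j k

/-- first vertex of the rerouted path at `q`. -/
def mfirst (c : Config D) (q : DiPath D) : V :=
  match c.t q with
  | none => q.first
  | some (p, _, _) => p.first

def inis (S : Setup D B0) (c : Config D) : Set V :=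
  {x | ∃ q ∈ S.Q, mfirst c q = x} ∪ {x | ∃ p ∈ c.F, p.first = x}

def Occ (S : Setup D B0) (c : Config D) : Set V :=
  {x | ∃ q ∈ S.Q, x ∈ mverts c q} ∪ {x | ∃ p ∈ c.F, x ∈ p.verts}

/-- structural validity -/
structure SValid (S : Setup D B0) (c : Config D) : Prop where
  hQt : ∀ q, c.t q ≠ none → q ∈ S.Q
  hmem : ∀ q p j k, c.t q = some (p,j,k) → p ∈ S.P
  hgood : ∀ q p j k, c.t q = some (p,j,k) → Good p q j k
  hself : ∀ q p j k, c.t q = some (p,j,k) → ∀ x ∈ p.verts.take (j+1), x ∉ q.verts.drop (k+1)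
  hdisj : ∀ q ∈ S.Q, ∀ q' ∈ S.Q, q ≠ q' → ∀ x ∈ mverts c q, x ∉ mverts c q'
  hF : c.F ⊆ S.P
  hFdisj : ∀ p ∈ c.F, ∀ q ∈ S.Q, ∀ x ∈ p.verts, x ∉ mverts c q

/-- full validity -/
structure FValid (S : Setup D B0) (c : Config D) extends SValid S c : Prop where
  howner : ∀ q p j k, c.t q = some (p,j,k) → p.first ∈ insert S.v S.J
  hFfirst : ∀ p ∈ c.F, p.first ∈ insert S.v S.J
  hkick : ∀ q p j k, c.t q = some (p,j,k) → q.first ∈ S.I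
  hdef : ((S.J ∪ {S.v}) \ inis S c).Subsingleton

lemma mverts_ne (c : Config D) (q : DiPath D) : mverts c q ≠ [] := by
  cases h : c.t q with
  | none => simpa [mverts, h] using q.ne
  | some val =>
      obtain ⟨p, j, k⟩ := val
      simpa [mverts, h] using mlist_ne p q j k

lemma mfirst_head? (c : Config D) (q : DiPath D) :
    (mverts c q).head? = some (mfirst c q) := by
  cases h : c.t q with
  | none => simp [mverts, mfirst, h, List.head?_eq_head q.ne, DiPath.first]
  | some val =>
      obtain ⟨p, j, k⟩ := val
      simp only [mverts, mfirst, h]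
      rw [List.head?_eq_head (mlist_ne p q j k), mlist_head p q j k]

lemma mlast_getLast? (hs : SValid S c) (q : DiPath D) :
    (mverts c q).getLast? = some q.last := by
  cases h : c.t q with
  | none => simp [mverts, h, List.getLast?_eq_getLast q.ne, DiPath.last]
  | some val =>
      obtain ⟨p, j, k⟩ := val
      simp only [mverts, h]
      rw [List.getLast?_eq_getLast (mlist_ne p q j k), mlist_last (hs.hgood q p j k h)]

lemma mfirst_mem (c : Config D) (q : DiPath D) : mfirst c q ∈ mverts c q := by
  apply List.mem_of_mem_head?
  rw [mfirst_head?]; simp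

lemma mverts_subset_Occ (c : Config D) {q : DiPath D} (hq : q ∈ S.Q) :
    ∀ x ∈ mverts c q, x ∈ Occ S c := fun x hx => Or.inl ⟨q, hq, hx⟩

lemma F_subset_Occ (c : Config D) {p : DiPath D} (hp : p ∈ c.F) :
    ∀ x ∈ p.verts, x ∈ Occ S c := fun x hx => Or.inr ⟨p, hp, hx⟩

/-- existence of the merged path as a `DiPath` -/
lemma exists_mpath (hs : SValid S c) {q : DiPath D} :
    ∃ r : DiPath D, r.verts = mverts c q := by
  cases h : c.t q with
  | none => exact ⟨q, by simp [mverts, h]⟩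
  | some val =>
      obtain ⟨p, j, k⟩ := val
      exact ⟨mpath p q j k (hs.hgood q p j k h) (hs.hself q p j k h), by simp [mpath, mverts, h]⟩

lemma mverts_last (hs : SValid S c) {q : DiPath D} {r : DiPath D} (h : r.verts = mverts c q) :
    r.last = q.last := by
  have h1 : r.verts.getLast? = some r.last := List.getLast?_eq_getLast r.ne
  rw [h, mlast_getLast? hs] at h1
  exact (Option.some_injective _ h1).symm

lemma mverts_first {c : Config D} {q : DiPath D} {r : DiPath D} (h : r.verts = mverts c q) :
    r.first = mfirst c q := by
  have h1 : r.verts.head? = some r.first := List.head?_eq_head r.ne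
  rw [h, mfirst_head?] at h1
  exact (Option.some_injective _ h1).symm

/-- the linkage associated to a structurally valid configuration -/
def linkR (S : Setup D B0) (c : Config D) : Set (DiPath D) :=
  {r | ∃ q ∈ S.Q, r.verts = mverts c q} ∪ c.F

lemma linkR_isLinkage (hs : SValid S c) : IsLinkage D B0 (linkR S c) := by
  constructor
  · rintro r (⟨q, hq, hv⟩ | hrF)
    · rw [mverts_last hs hv]; exact S.hQ.1 q hq
    · exact S.hP.1 r (hs.hF hrF)
  · rintro r (⟨q, hq, hv⟩ | hrF) r' (⟨q', hq', hv'⟩ | hr'F) hne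
    · have hqq : q ≠ q' := by
        rintro rfl
        exact hne (DiPath.ext' (hv.trans hv'.symm))
      rw [Set.disjoint_left]
      intro x hx hx'
      exact hs.hdisj q hq q' hq' hqq x (by rwa [← hv]) (by rwa [← hv'])
    · rw [Set.disjoint_left]
      intro x hx hx'
      exact hs.hFdisj r' hr'F q hq x hx' (by rwa [← hv])
    · rw [Set.disjoint_left]
      intro x hx hx'
      exact hs.hFdisj r hrF q' hq' x hx (by rwa [← hv'])
    · exact S.hP.2 r (hs.hF hrF) r' (hs.hF hr'F) hne

lemma linkR_ini (hs : SValid S c) : Ini (linkR S c) = inis S c := by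
  ext x
  constructor
  · rintro ⟨r, (⟨q, hq, hv⟩ | hrF), rfl⟩
    · exact Or.inl ⟨q, hq, (mverts_first hv).symm⟩
    · exact Or.inr ⟨r, hrF, rfl⟩
  · rintro (⟨q, hq, hx⟩ | ⟨p, hp, hx⟩)
    · obtain ⟨r, hv⟩ := exists_mpath hs (q := q)
      exact ⟨r, Or.inl ⟨q, hq, hv⟩, by rw [mverts_first hv, hx]⟩
    · exact ⟨p, Or.inr hp, hx⟩

lemma linkable_inis (hs : SValid S c) : Linkable D B0 (inis S c) :=
  ⟨linkR S c, linkR_isLinkage hs, linkR_ini hs⟩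

/-- dropping one initial vertex from a linkable set -/
lemma linkable_diff {K : Set V} (h : Linkable D B0 K) (u : V) : Linkable D B0 (K \ {u}) := by
  obtain ⟨R, hR, hI⟩ := h
  refine ⟨{r ∈ R | r.first ≠ u}, ⟨fun p hp => hR.1 p hp.1,
    fun p hp q hq => hR.2 p hp.1 q hq.1⟩, ?_⟩
  ext x
  constructor
  · rintro ⟨r, ⟨hr, hru⟩, rfl⟩
    exact ⟨hI ▸ ⟨r, hr, rfl⟩, hru⟩
  · rintro ⟨hx, hxu⟩
    rw [← hI] at hx
    obtain ⟨r, hr, rfl⟩ := hx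
    exact ⟨r, ⟨hr, hxu⟩, rfl⟩

lemma mfirst_inj (hs : SValid S c) {q q' : DiPath D} (hq : q ∈ S.Q) (hq' : q' ∈ S.Q)
    (h : mfirst c q = mfirst c q') : q = q' := by
  by_contra hne
  exact hs.hdisj q hq q' hq' hne _ (mfirst_mem c q) (h ▸ mfirst_mem c q')

lemma mfirst_notmem_F (hs : SValid S c) {q : DiPath D} (hq : q ∈ S.Q)
    {p : DiPath D} (hp : p ∈ c.F) : mfirst c q ∉ p.verts := by
  intro hmem
  exact hs.hFdisj p hp q hq _ hmem (mfirst_mem c q)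

lemma inis_subset (hf : FValid S c) : inis S c ⊆ S.J ∪ {S.v} := by
  rintro x (⟨q, hq, rfl⟩ | ⟨p, hp, rfl⟩)
  · cases h : c.t q with
    | none =>
        left
        rw [← S.hQJ]
        exact ⟨q, hq, by simp [mfirst, h]⟩
    | some val =>
        obtain ⟨p, j, k⟩ := val
        have := hf.howner q p j k h
        simp only [mfirst, h]
        rcases this with h1 | h1
        · exact Or.inr (by simp [h1])
        · exact Or.inl h1
  · rcases hf.hFfirst p hp with h1 | h1
    · exact Or.inr (by simp [h1])
    · exact Or.inl h1

lemma nodup_getElem_not_mem_drop {l : List V} (hn : l.Nodup) {k : ℕ} (hk : k < l.length) :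
    l[k] ∉ l.drop (k+1) := by
  intro hmem
  rw [List.mem_iff_getElem] at hmem
  obtain ⟨m, hm, hme⟩ := hmem
  rw [List.getElem_drop] at hme
  have := (hn.getElem_inj_iff).1 hme
  omega

lemma mem_drop_index {l : List V} (hn : l.Nodup) {k k' : ℕ} (hk : k < l.length)
    (h : l[k] ∈ l.drop (k'+1)) : k' < k := by
  rw [List.mem_iff_getElem] at h
  obtain ⟨m, hm, hme⟩ := h
  rw [List.getElem_drop] at hme
  have := (hn.getElem_inj_iff).1 hme
  omega

section Update

variable {c : Config D} {q₀ pw : DiPath D} {i k : ℕ}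

/-- The updated configuration. -/
noncomputable def upd (c : Config D) (q₀ pw : DiPath D) (i k : ℕ) : Config D :=
  ⟨Function.update c.t q₀ (some (pw, i, k)), c.F⟩

/-- The hypotheses for a valid service step. -/
structure ServeHyp (S : Setup D B0) (c : Config D) (q₀ pw : DiPath D) (i k : ℕ) : Prop where
  hq₀ : q₀ ∈ S.Q
  hpw : pw ∈ S.P
  hw : pw.first ∉ inis S c
  hi : i < pw.verts.length
  hpre : ∀ m, m < i → ∀ (hm : m < pw.verts.length), pw.verts[m] ∉ Occ S c
  hk : k < q₀.verts.length
  hyk : q₀.verts[k] = pw.verts[i]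
  hymem : pw.verts[i] ∈ mverts c q₀
  hcase : c.t q₀ = none ∨ ∃ p' j' k', c.t q₀ = some (p', j', k') ∧ k' < k

lemma upd_t_ne (h : q ≠ q₀) : (upd c q₀ pw i k).t q = c.t q := by
  simp [upd, Function.update_of_ne h]

lemma upd_t_eq : (upd c q₀ pw i k).t q₀ = some (pw, i, k) := by
  simp [upd]

lemma upd_mverts_ne (h : q ≠ q₀) : mverts (upd c q₀ pw i k) q = mverts c q := by
  simp [mverts, upd_t_ne h]

lemma upd_mverts_eq : mverts (upd c q₀ pw i k) q₀ = mlist pw q₀ i k := by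
  simp [mverts, upd_t_eq]

lemma upd_mfirst_ne (h : q ≠ q₀) : mfirst (upd c q₀ pw i k) q = mfirst c q := by
  simp [mfirst, upd_t_ne h]

lemma upd_mfirst_eq : mfirst (upd c q₀ pw i k) q₀ = pw.first := by
  simp [mfirst, upd_t_eq]

variable (hs : SValid S c) (hsh : ServeHyp S c q₀ pw i k)

section
include hs hsh

lemma take_cases {x : V} (hx : x ∈ pw.verts.take (i+1)) :
    x = pw.verts[i]'hsh.hi ∨ x ∉ Occ S c := by
  rw [List.mem_iff_getElem] at hx
  obtain ⟨m, hm, hme⟩ := hx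
  rw [List.getElem_take] at hme
  have hm' : m < i + 1 := by
    simp [List.length_take] at hm
    omega
  rcases Nat.lt_or_ge m i with h | h
  · exact Or.inr (hme ▸ hsh.hpre m h _)
  · have : m = i := by omega
    subst this
    exact Or.inl hme.symm

lemma drop_sub : ∀ x ∈ q₀.verts.drop (k+1), x ∈ mverts c q₀ := by
  intro x hx
  rcases hsh.hcase with h | ⟨p', j', k', h, hkk⟩
  · simp only [mverts, h]
    exact List.drop_subset _ _ hx
  · simp only [mverts, h, mlist]
    apply List.mem_append_right
    have : q₀.verts.drop (k+1) = (q₀.verts.drop (k'+1)).drop (k - k') := by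
      rw [List.drop_drop]
      congr 1
      omega
    rw [this] at hx
    exact List.drop_subset _ _ hx

lemma new_cases {x : V} (hx : x ∈ mlist pw q₀ i k) :
    x ∈ mverts c q₀ ∨ x ∉ Occ S c := by
  rcases mem_take_of_mlist hx with h | h
  · rcases take_cases hs hsh h with h1 | h1
    · subst h1
      exact Or.inl hsh.hymem
    · exact Or.inr h1
  · exact Or.inl (drop_sub hs hsh x h)

lemma upd_svalid : SValid S (upd c q₀ pw i k) := by
  constructor
  · intro q hq
    by_cases h : q = q₀
    · exact h ▸ hsh.hq₀
    · exact hs.hQt q (by rwa [upd_t_ne h] at hq)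
  · intro q p j k' hq
    by_cases h : q = q₀
    · subst h
      rw [upd_t_eq] at hq
      obtain ⟨rfl, rfl, rfl⟩ : pw = p ∧ i = j ∧ k = k' := by
        simpa using hq
      exact hsh.hpw
    · exact hs.hmem q p j k' (by rwa [upd_t_ne h] at hq)
  · intro q p j k' hq
    by_cases h : q = q₀
    · subst h
      rw [upd_t_eq] at hq
      obtain ⟨rfl, rfl, rfl⟩ : pw = p ∧ i = j ∧ k = k' := by simpa using hq
      exact ⟨hsh.hi, hsh.hk, hsh.hyk.symm⟩
    · exact hs.hgood q p j k' (by rwa [upd_t_ne h] at hq)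
  · intro q p j k' hq
    by_cases h : q = q₀
    · subst h
      rw [upd_t_eq] at hq
      obtain ⟨rfl, rfl, rfl⟩ : pw = p ∧ i = j ∧ k = k' := by simpa using hq
      intro x hx hx'
      rcases take_cases hs hsh hx with h1 | h1
      · subst h1
        rw [← hsh.hyk] at hx'
        exact nodup_getElem_not_mem_drop q.nodup hsh.hk hx'
      · exact h1 (mverts_subset_Occ c hsh.hq₀ x (drop_sub hs hsh x hx'))
    · exact hs.hself q p j k' (by rwa [upd_t_ne h] at hq)
  · intro q hq q' hq' hne x hx hx'
    by_cases h : q = q₀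
    · subst h
      have h' : q' ≠ q := fun hh => hne hh.symm
      rw [upd_mverts_eq] at hx
      rw [upd_mverts_ne h'] at hx'
      rcases new_cases hs hsh hx with h1 | h1
      · exact hs.hdisj q hq q' hq' hne x h1 hx'
      · exact h1 (mverts_subset_Occ c hq' x hx')
    · rw [upd_mverts_ne h] at hx
      by_cases h' : q' = q₀
      · subst h'
        rw [upd_mverts_eq] at hx'
        rcases new_cases hs hsh hx' with h1 | h1
        · exact hs.hdisj q hq q' hq' hne x hx h1
        · exact h1 (mverts_subset_Occ c hq x hx)
      · rw [upd_mverts_ne h'] at hx'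
        exact hs.hdisj q hq q' hq' hne x hx hx'
  · exact hs.hF
  · intro p hp q hq x hx hx'
    by_cases h : q = q₀
    · subst h
      rw [upd_mverts_eq] at hx'
      rcases new_cases hs hsh hx' with h1 | h1
      · exact hs.hFdisj p hp q hq x hx h1
      · exact h1 (F_subset_Occ c hp x hx)
    · rw [upd_mverts_ne h] at hx'
      exact hs.hFdisj p hp q hq x hx hx'

lemma upd_inis : inis S (upd c q₀ pw i k) = insert pw.first (inis S c \ {mfirst c q₀}) := by
  ext x
  constructor
  · rintro (⟨q, hq, rfl⟩ | ⟨p, hp, rfl⟩)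
    · by_cases h : q = q₀
      · subst h
        rw [upd_mfirst_eq]
        exact Or.inl rfl
      · rw [upd_mfirst_ne h]
        refine Or.inr ⟨Or.inl ⟨q, hq, rfl⟩, ?_⟩
        simp only [Set.mem_singleton_iff]
        intro heq
        exact h (mfirst_inj hs hq hsh.hq₀ heq)
    · refine Or.inr ⟨Or.inr ⟨p, hp, rfl⟩, ?_⟩
      simp only [Set.mem_singleton_iff]
      intro heq
      exact mfirst_notmem_F hs hsh.hq₀ hp (heq ▸ first_mem p)
  · rintro (rfl | ⟨hx, hxne⟩)
    · exact Or.inl ⟨q₀, hsh.hq₀, upd_mfirst_eq⟩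
    · rcases hx with ⟨q, hq, rfl⟩ | ⟨p, hp, rfl⟩
      · have h : q ≠ q₀ := by
          rintro rfl
          simp at hxne
        exact Or.inl ⟨q, hq, upd_mfirst_ne h⟩
      · exact Or.inr ⟨p, hp, rfl⟩

end
end Update

/-- order on merge data -/
def optLE : Option (DiPath D × ℕ × ℕ) → Option (DiPath D × ℕ × ℕ) → Prop
  | none, _ => True
  | some _, none => False
  | some x, some y => x.2.2 < y.2.2 ∨ x = y

lemma optLE_refl (a : Option (DiPath D × ℕ × ℕ)) : optLE a a := by
  cases a with
  | none => trivial
  | some x => exact Or.inr rfl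

lemma optLE_trans {a b c : Option (DiPath D × ℕ × ℕ)} (h1 : optLE a b) (h2 : optLE b c) :
    optLE a c := by
  cases a with
  | none => trivial
  | some x =>
    cases b with
    | none => exact absurd h1 (by simp [optLE])
    | some y =>
      cases c with
      | none => exact absurd h2 (by simp [optLE])
      | some z =>
        simp only [optLE] at *
        rcases h1 with h1 | rfl
        · rcases h2 with h2 | rfl
          · exact Or.inl (h1.trans h2)
          · exact Or.inl h1
        · exact h2

lemma optLE_antisymm {a b : Option (DiPath D × ℕ × ℕ)} (h1 : optLE a b) (h2 : optLE b a) :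
    a = b := by
  cases a with
  | none =>
    cases b with
    | none => rfl
    | some y => exact absurd h2 (by simp [optLE])
  | some x =>
    cases b with
    | none => exact absurd h1 (by simp [optLE])
    | some y =>
      simp only [optLE] at h1 h2
      rcases h1 with h1 | rfl
      · rcases h2 with h2 | rfl
        · omega
        · rfl
      · rfl

/-- order on configurations -/
def cle (c c' : Config D) : Prop := (∀ q, optLE (c.t q) (c'.t q)) ∧ c.F ⊆ c'.F

lemma cle_refl (c : Config D) : cle c c := ⟨fun q => optLE_refl _, subset_rfl⟩

lemma cle_trans {a b c : Config D} (h1 : cle a b) (h2 : cle b c) : cle a c :=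
  ⟨fun q => optLE_trans (h1.1 q) (h2.1 q), h1.2.trans h2.2⟩

lemma mverts_congr {c c' : Config D} {q : DiPath D} (h : c.t q = c'.t q) :
    mverts c q = mverts c' q := by
  unfold mverts
  rw [h]

lemma mfirst_congr {c c' : Config D} {q : DiPath D} (h : c.t q = c'.t q) :
    mfirst c q = mfirst c' q := by
  unfold mfirst
  rw [h]

lemma linkage_first_inj {R : Set (DiPath D)} (hL : IsLinkage D B0 R)
    {p q : DiPath D} (hp : p ∈ R) (hq : q ∈ R) (h : p.first = q.first) : p = q := by
  by_contra hne
  have := hL.2 p hp q hq hne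
  rw [Set.disjoint_left] at this
  exact this (first_mem p) (h ▸ first_mem q)

section Chain

variable (S)
variable {CH : Set {c : Config D // FValid S c}}

/-- the relation for Zorn -/
def crel (x y : {c : Config D // FValid S c}) : Prop := cle x.1 y.1

variable (hCH : IsChain (crel S) CH) (hne : CH.Nonempty)

/-- the set of junction positions occurring at `q` along the chain -/
def KS (CH : Set {c : Config D // FValid S c}) (q : DiPath D) : Set ℕ :=
  {k | ∃ x ∈ CH, ∃ p j, x.1.t q = some (p, j, k)}

lemma KS_bdd (q : DiPath D) : BddAbove (KS S CH q) := by
  refine ⟨q.verts.length, ?_⟩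
  rintro k ⟨x, hx, p, j, hq⟩
  obtain ⟨_, hk, _⟩ := x.2.hgood q p j k hq
  exact le_of_lt hk

include hCH hne in
lemma exists_real {q : DiPath D} (h : ∃ x ∈ CH, x.1.t q ≠ none) :
    ∃ x ∈ CH, ∃ p j, x.1.t q = some (p, j, sSup (KS S CH q)) := by
  have hKne : (KS S CH q).Nonempty := by
    obtain ⟨x, hx, hq⟩ := h
    cases ht : x.1.t q with
    | none => exact absurd ht hq
    | some val => exact ⟨val.2.2, x, hx, val.1, val.2.1, by rw [ht]⟩
  have := Nat.sSup_mem hKne (KS_bdd S q)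
  obtain ⟨x, hx, p, j, hq⟩ := this
  exact ⟨x, hx, p, j, hq⟩

/-- a chain member realizing the sup at `q` -/
noncomputable def realz (q : DiPath D) : {c : Config D // FValid S c} :=
  if h : ∃ x ∈ CH, x.1.t q ≠ none then (exists_real S hCH hne h).choose
  else hne.choose

include hCH hne in
lemma realz_mem (q : DiPath D) : realz S hCH hne q ∈ CH := by
  unfold realz
  split
  · next h => exact (exists_real S hCH hne h).choose_spec.1
  · exact hne.choose_spec

include hCH hne in
lemma realz_none {q : DiPath D} (h : ¬ ∃ x ∈ CH, x.1.t q ≠ none) :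
    (realz S hCH hne q).1.t q = none := by
  push_neg at h
  exact h _ (realz_mem S hCH hne q)

include hCH hne in
lemma realz_some {q : DiPath D} (h : ∃ x ∈ CH, x.1.t q ≠ none) :
    ∃ p j, (realz S hCH hne q).1.t q = some (p, j, sSup (KS S CH q)) := by
  unfold realz
  rw [dif_pos h]
  exact (exists_real S hCH hne h).choose_spec.2

include hCH hne in
lemma le_realz {x : {c : Config D // FValid S c}} (hx : x ∈ CH) (q : DiPath D) :
    optLE (x.1.t q) ((realz S hCH hne q).1.t q) := by
  cases ht : x.1.t q with
  | none => trivial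
  | some val =>
    obtain ⟨p, j, k⟩ := val
    have htouch : ∃ x ∈ CH, x.1.t q ≠ none := ⟨x, hx, by simp [ht]⟩
    obtain ⟨p', j', hq'⟩ := realz_some S hCH hne htouch
    rw [hq']
    have hk : k ≤ sSup (KS S CH q) := le_csSup (KS_bdd S q) ⟨x, hx, p, j, ht⟩
    rcases Nat.lt_or_ge k (sSup (KS S CH q)) with h | h
    · exact Or.inl h
    · have hkk : k = sSup (KS S CH q) := by omega
      subst hkk
      -- same junction: values must coincide (by comparability)
      rcases eq_or_ne x (realz S hCH hne q) with rfl | hxy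
      · rw [ht] at hq'
        obtain ⟨rfl, rfl⟩ : p = p' ∧ j = j' := by simpa using hq'
        exact optLE_refl _
      · rcases hCH hx (realz_mem S hCH hne q) hxy with hle | hle
        · have h2 := hle.1 q
          rw [ht, hq'] at h2
          simp only [optLE] at h2
          rcases h2 with h1 | h1
          · simp at h1
          · exact Or.inr h1
        · have h2 := hle.1 q
          rw [ht, hq'] at h2
          simp only [optLE] at h2
          rcases h2 with h1 | h1
          · simp at h1
          · exact Or.inr h1.symm

include hCH hne in
lemma realz_stable {x : {c : Config D // FValid S c}} (hx : x ∈ CH) (q : DiPath D)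
    (h : crel S (realz S hCH hne q) x) : x.1.t q = (realz S hCH hne q).1.t q :=
  optLE_antisymm (le_realz S hCH hne hx q) (h.1 q)

/-- the supremum configuration of a chain -/
noncomputable def supc : Config D :=
  ⟨fun q => (realz S hCH hne q).1.t q, ⋃ x ∈ CH, x.1.F⟩

include hCH hne in
lemma supc_ub {x : {c : Config D // FValid S c}} (hx : x ∈ CH) :
    cle x.1 (supc S hCH hne) :=
  ⟨fun q => le_realz S hCH hne hx q, fun p hp => Set.mem_biUnion hx hp⟩

include hCH hne in
/-- a common chain member realizing the sup at two given coordinates, and containing a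
given free path -/
lemma exists_common (q q' : DiPath D) :
    ∃ x ∈ CH, x.1.t q = (supc S hCH hne).t q ∧ x.1.t q' = (supc S hCH hne).t q' := by
  rcases eq_or_ne (realz S hCH hne q) (realz S hCH hne q') with heq | hne'
  · exact ⟨realz S hCH hne q, realz_mem S hCH hne q, rfl, by rw [heq]; rfl⟩
  · rcases hCH (realz_mem S hCH hne q) (realz_mem S hCH hne q') hne' with hle | hle
    · exact ⟨realz S hCH hne q', realz_mem S hCH hne q',
        realz_stable S hCH hne (realz_mem S hCH hne q') q hle, rfl⟩
    · exact ⟨realz S hCH hne q, realz_mem S hCH hne q, rfl,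
        realz_stable S hCH hne (realz_mem S hCH hne q) q' hle⟩

include hCH hne in
lemma exists_common_F {p : DiPath D} (hp : p ∈ (supc S hCH hne).F) (q : DiPath D) :
    ∃ x ∈ CH, p ∈ x.1.F ∧ x.1.t q = (supc S hCH hne).t q := by
  obtain ⟨x₁, hx₁, hpx⟩ : ∃ x ∈ CH, p ∈ x.1.F := by
    simpa [supc, Set.mem_iUnion] using hp
  rcases eq_or_ne x₁ (realz S hCH hne q) with heq | hne'
  · exact ⟨realz S hCH hne q, realz_mem S hCH hne q, heq ▸ hpx, rfl⟩
  · rcases hCH hx₁ (realz_mem S hCH hne q) hne' with hle | hle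
    · exact ⟨realz S hCH hne q, realz_mem S hCH hne q, hle.2 hpx, rfl⟩
    · exact ⟨x₁, hx₁, hpx, realz_stable S hCH hne hx₁ q hle⟩

include hCH hne in
lemma supc_mverts (q : DiPath D) {x : {c : Config D // FValid S c}}
    (h : x.1.t q = (supc S hCH hne).t q) : mverts (supc S hCH hne) q = mverts x.1 q :=
  mverts_congr h.symm

include hCH hne in
lemma chain_bound {T : Set {c : Config D // FValid S c}} (hT : T ⊆ CH) (hfin : T.Finite) :
    ∃ z ∈ CH, ∀ x ∈ T, crel S x z := by
  have key : ∀ (T' : Set {c : Config D // FValid S c}), T'.Finite → T' ⊆ CH →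
      ∃ z ∈ CH, ∀ x ∈ T', crel S x z := by
    intro T' hfin'
    refine Set.Finite.induction_on
      (motive := fun t _ => t ⊆ CH → ∃ z ∈ CH, ∀ x ∈ t, crel S x z) T' hfin' ?_ ?_
    · intro _
      obtain ⟨z, hz⟩ := hne
      exact ⟨z, hz, by simp⟩
    · intro a s ha hs IH hsub
      obtain ⟨z, hz, hzb⟩ := IH (subset_trans (Set.subset_insert a s) hsub)
      have haCH : a ∈ CH := hsub (Set.mem_insert a s)
      rcases eq_or_ne a z with rfl | hne'
      · exact ⟨a, haCH, by
          rintro x (rfl | hx)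
          · exact cle_refl _
          · exact hzb x hx⟩
      · rcases hCH haCH hz hne' with hle | hle
        · exact ⟨z, hz, by
            rintro x (rfl | hx)
            · exact hle
            · exact hzb x hx⟩
        · exact ⟨a, haCH, by
            rintro x (rfl | hx)
            · exact cle_refl _
            · exact cle_trans (hzb x hx) hle⟩
  exact key T hfin hT

include hCH hne in
lemma eventual_deficient {u : V} (hu : u ∈ (S.J ∪ {S.v}) \ inis S (supc S hCH hne)) :
    ∃ z ∈ CH, ∀ y ∈ CH, crel S z y → u ∉ inis S y.1 := by
  obtain ⟨huJ, huI⟩ := hu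
  -- the set of paths whose current owner could ever be u, plus u's own path
  set W : Set (DiPath D) :=
    {q | ∃ x ∈ CH, ∃ p j k, x.1.t q = some (p,j,k) ∧ p.first = u} with hW
  set U : Set (DiPath D) := {q | q ∈ S.Q ∧ q.first = u} with hU
  have hWQ : ∀ q ∈ W, q ∈ S.Q := by
    rintro q ⟨x, hx, p, j, k, hq, hp⟩
    exact x.2.hQt q (by simp [hq])
  have hWfin : W.Finite := by
    rcases Set.eq_empty_or_nonempty W with h | ⟨qb, x, hx, pb, jb, kb, hqb, hpb⟩
    · simp [h]
    · have hpbP : pb ∈ S.P := x.2.hmem qb pb jb kb hqb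
      have hsub : W ⊆ ⋃ y ∈ {z | z ∈ pb.verts}, {q | q ∈ S.Q ∧ y ∈ q.verts} := by
        rintro q ⟨x', hx', p, j, k, hq, hp⟩
        have hpP : p ∈ S.P := x'.2.hmem q p j k hq
        have hppb : p = pb := linkage_first_inj S.hP hpP hpbP (by rw [hp, hpb])
        obtain ⟨hj, hk, heq⟩ := x'.2.hgood q p j k hq
        refine Set.mem_biUnion (show p.verts[j] ∈ {z | z ∈ pb.verts} from ?_) ?_
        · rw [show {z | z ∈ pb.verts} = {z | z ∈ p.verts} by rw [hppb]]
          exact List.getElem_mem hj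
        · exact ⟨x'.2.hQt q (by simp [hq]), heq ▸ List.getElem_mem hk⟩
      refine Set.Finite.subset (Set.Finite.biUnion (List.finite_toSet pb.verts) ?_) hsub
      intro y _
      apply Set.Subsingleton.finite
      intro q1 hq1 q2 hq2
      by_contra hne'
      have := S.hQ.2 q1 hq1.1 q2 hq2.1 hne'
      rw [Set.disjoint_left] at this
      exact this hq1.2 hq2.2
  have hUfin : U.Finite := by
    apply Set.Subsingleton.finite
    intro q1 hq1 q2 hq2
    exact linkage_first_inj S.hQ hq1.1 hq2.1 (by rw [hq1.2, hq2.2])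
  have hTfin : ((fun q => realz S hCH hne q) '' (W ∪ U)).Finite :=
    (hWfin.union hUfin).image _
  have hTCH : (fun q => realz S hCH hne q) '' (W ∪ U) ⊆ CH := by
    rintro x ⟨q, hq, rfl⟩
    exact realz_mem S hCH hne q
  obtain ⟨z, hz, hzb⟩ := chain_bound S hCH hne hTCH hTfin
  refine ⟨z, hz, ?_⟩
  rintro y hy hzy hin
  -- the key: if q belongs to W ∪ U then y agrees with supc at q
  have hagree : ∀ q ∈ W ∪ U, y.1.t q = (supc S hCH hne).t q := by
    intro q hq
    have h1 : crel S (realz S hCH hne q) z := hzb _ ⟨q, hq, rfl⟩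
    exact realz_stable S hCH hne hy q (cle_trans h1 hzy)
  rcases hin with ⟨q, hqQ, hqf⟩ | ⟨p, hp, hpf⟩
  · have hqT : q ∈ W ∪ U := by
      cases hty : y.1.t q with
      | none =>
          right
          refine ⟨hqQ, ?_⟩
          rw [← hqf]
          simp [mfirst, hty]
      | some val =>
          obtain ⟨p, j, k⟩ := val
          left
          exact ⟨y, hy, p, j, k, hty, by rw [← hqf]; simp [mfirst, hty]⟩
    apply huI
    left
    exact ⟨q, hqQ, by rw [← mfirst_congr (hagree q hqT), hqf]⟩
  · apply huI
    right
    exact ⟨p, Set.mem_biUnion hy hp, hpf⟩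

include hCH hne in
lemma supc_fvalid : FValid S (supc S hCH hne) := by
  have hsup : ∀ q, (supc S hCH hne).t q = (realz S hCH hne q).1.t q := fun q => rfl
  refine { hQt := ?_, hmem := ?_, hgood := ?_, hself := ?_, hdisj := ?_, hF := ?_,
           hFdisj := ?_, howner := ?_, hFfirst := ?_, hkick := ?_, hdef := ?_ }
  · intro q h
    exact (realz S hCH hne q).2.hQt q h
  · intro q p j k h
    exact (realz S hCH hne q).2.hmem q p j k h
  · intro q p j k h
    exact (realz S hCH hne q).2.hgood q p j k h
  · intro q p j k h
    exact (realz S hCH hne q).2.hself q p j k h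
  · intro q hq q' hq' hne' x hx hx'
    obtain ⟨w, hw, h1, h2⟩ := exists_common S hCH hne q q'
    rw [supc_mverts S hCH hne q h1] at hx
    rw [supc_mverts S hCH hne q' h2] at hx'
    exact w.2.hdisj q hq q' hq' hne' x hx hx'
  · rintro p hp
    obtain ⟨x, hx, hpx⟩ : ∃ x ∈ CH, p ∈ x.1.F := by
      simpa [supc, Set.mem_iUnion] using hp
    exact x.2.hF hpx
  · intro p hp q hq x hx hx'
    obtain ⟨w, hw, h1, h2⟩ := exists_common_F S hCH hne hp q
    rw [supc_mverts S hCH hne q h2] at hx'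
    exact w.2.hFdisj p h1 q hq x hx hx'
  · intro q p j k h
    exact (realz S hCH hne q).2.howner q p j k h
  · rintro p hp
    obtain ⟨x, hx, hpx⟩ : ∃ x ∈ CH, p ∈ x.1.F := by
      simpa [supc, Set.mem_iUnion] using hp
    exact x.2.hFfirst p hpx
  · intro q p j k h
    exact (realz S hCH hne q).2.hkick q p j k h
  · intro u hu u' hu'
    obtain ⟨z1, hz1, hP1⟩ := eventual_deficient S hCH hne hu
    obtain ⟨z2, hz2, hP2⟩ := eventual_deficient S hCH hne hu'
    rcases eq_or_ne z1 z2 with rfl | hne'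
    · exact z1.2.hdef ⟨hu.1, hP1 z1 hz1 (cle_refl _)⟩ ⟨hu'.1, hP2 z1 hz1 (cle_refl _)⟩
    · rcases hCH hz1 hz2 hne' with hle | hle
      · exact z2.2.hdef ⟨hu.1, hP1 z2 hz2 hle⟩ ⟨hu'.1, hP2 z2 hz2 (cle_refl _)⟩
      · exact z1.2.hdef ⟨hu.1, hP1 z1 hz1 (cle_refl _)⟩ ⟨hu'.1, hP2 z1 hz1 hle⟩

end Chain

/-- the initial configuration -/
def czero : Config D := ⟨fun _ => none, ∅⟩

lemma czero_inis (S : Setup D B0) : inis S (czero : Config D) = S.J := by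
  rw [← S.hQJ]
  ext x
  constructor
  · rintro (⟨q, hq, rfl⟩ | ⟨p, hp, _⟩)
    · exact ⟨q, hq, rfl⟩
    · exact absurd hp (by simp [czero])
  · rintro ⟨q, hq, rfl⟩
    exact Or.inl ⟨q, hq, rfl⟩

lemma czero_fvalid (S : Setup D B0) : FValid S (czero : Config D) := by
  refine { hQt := ?_, hmem := ?_, hgood := ?_, hself := ?_, hdisj := ?_, hF := ?_,
           hFdisj := ?_, howner := ?_, hFfirst := ?_, hkick := ?_, hdef := ?_ }
  · intro q h; exact absurd rfl h
  · intro q p j k h; exact absurd h (by simp [czero])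
  · intro q p j k h; exact absurd h (by simp [czero])
  · intro q p j k h; exact absurd h (by simp [czero])
  · intro q hq q' hq' hne' x hx hx'
    have := S.hQ.2 q hq q' hq' hne'
    rw [Set.disjoint_left] at this
    exact this hx hx'
  · simp [czero]
  · intro p hp; exact absurd hp (by simp [czero])
  · intro q p j k h; exact absurd h (by simp [czero])
  · intro p hp; exact absurd hp (by simp [czero])
  · intro q p j k h; exact absurd h (by simp [czero])
  · intro u hu u' hu'
    rw [czero_inis S] at hu hu'
    have h1 : u = S.v := by
      rcases hu.1 with h | h
      · exact absurd h hu.2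
      · simpa using h
    have h2 : u' = S.v := by
      rcases hu'.1 with h | h
      · exact absurd h hu'.2
      · simpa using h
    rw [h1, h2]

lemma first_hit (l : List V) (O : Set V) :
    (∀ x ∈ l, x ∉ O) ∨ ∃ i, ∃ h : i < l.length, l[i] ∈ O ∧
      ∀ m (hm : m < l.length), m < i → l[m] ∉ O := by
  induction l with
  | nil => left; simp
  | cons a l IH =>
    by_cases ha : a ∈ O
    · right
      exact ⟨0, by simp, ha, fun m hm hmi => by omega⟩
    · rcases IH with h | ⟨i, hi, hmem, hpre⟩
      · left
        intro x hx
        rcases List.mem_cons.1 hx with rfl | hx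
        · exact ha
        · exact h x hx
      · right
        refine ⟨i+1, by simpa using Nat.succ_lt_succ hi, by simpa using hmem, ?_⟩
        intro m hm hmi
        cases m with
        | zero => simpa using ha
        | succ m' =>
            have := hpre m' (by simpa using hm) (by omega)
            simpa using this

lemma max_success (S : Setup D B0) {m : Config D} (hm : FValid S m)
    (hmax : ∀ c' : Config D, FValid S c' → cle m c' → cle c' m)
    (hJI : (S.J \ S.I).Nonempty) :
    ∃ u ∈ S.J \ S.I, Linkable D B0 ((S.J ∪ {S.v}) \ {u}) := by
  by_cases hD0 : S.J ∪ {S.v} ⊆ inis S m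
  · -- everything is served : J ∪ {v} is linkable
    have heq : inis S m = S.J ∪ {S.v} := Set.Subset.antisymm (inis_subset hm) hD0
    obtain ⟨u, hu⟩ := hJI
    refine ⟨u, hu, ?_⟩
    have := linkable_diff (heq ▸ linkable_inis hm.toSValid) u
    exact this
  · -- there is a (unique) deficient element w
    rw [Set.not_subset] at hD0
    obtain ⟨w, hwJv, hwni⟩ := hD0
    have hDw : ∀ x, x ∈ S.J ∪ {S.v} → x ∉ inis S m → x = w := by
      intro x hx hxni
      exact hm.hdef ⟨hx, hxni⟩ ⟨hwJv, hwni⟩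
    have hinisEq : inis S m = (S.J ∪ {S.v}) \ {w} := by
      ext x
      constructor
      · intro hx
        refine ⟨inis_subset hm hx, ?_⟩
        simp only [Set.mem_singleton_iff]
        rintro rfl
        exact hwni hx
      · rintro ⟨hx, hxw⟩
        by_contra hxni
        exact hxw (hDw x hx hxni)
    have hwI : w ∈ S.I := by
      rcases hwJv with hwJ | hwv
      · rw [← S.hQJ] at hwJ
        obtain ⟨qw, hqw, hqwf⟩ := hwJ
        cases ht : m.t qw with
        | none =>
            exact absurd (Or.inl ⟨qw, hqw, by simp [mfirst, ht, hqwf]⟩) hwni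
        | some val =>
            obtain ⟨p, j, k⟩ := val
            exact hqwf ▸ hm.hkick qw p j k ht
      · simp only [Set.mem_singleton_iff] at hwv
        exact hwv ▸ S.hvI
    obtain ⟨pw, hpwP, hpwf⟩ : ∃ p ∈ S.P, p.first = w := by
      rw [← S.hPI] at hwI
      exact hwI
    rcases first_hit pw.verts (Occ S m) with hno | ⟨i, hi, hyO, hpre⟩
    · -- no hit : add pw as a free path, contradicting maximality
      exfalso
      set c' : Config D := ⟨m.t, insert pw m.F⟩ with hc'
      have hFsub : ∀ q, mverts c' q = mverts m q := fun q => rfl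
      have hic : inis S c' = inis S m ∪ {w} := by
        ext x
        constructor
        · rintro (⟨q, hq, rfl⟩ | ⟨p, hp, rfl⟩)
          · exact Or.inl (Or.inl ⟨q, hq, rfl⟩)
          · rcases Set.mem_insert_iff.1 hp with rfl | hp
            · exact Or.inr (by simp [hpwf])
            · exact Or.inl (Or.inr ⟨p, hp, rfl⟩)
        · rintro ((⟨q, hq, rfl⟩ | ⟨p, hp, rfl⟩) | hx)
          · exact Or.inl ⟨q, hq, rfl⟩
          · exact Or.inr ⟨p, Set.mem_insert_of_mem _ hp, rfl⟩
          · simp only [Set.mem_singleton_iff] at hx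
            exact Or.inr ⟨pw, Set.mem_insert _ _, hx ▸ hpwf⟩
      have hsv : FValid S c' := by
        refine { hQt := hm.hQt, hmem := hm.hmem, hgood := hm.hgood, hself := hm.hself,
                 hdisj := ?_, hF := ?_, hFdisj := ?_, howner := hm.howner,
                 hFfirst := ?_, hkick := hm.hkick, hdef := ?_ }
        · intro q hq q' hq' hne' x hx hx'
          exact hm.hdisj q hq q' hq' hne' x hx hx'
        · exact Set.insert_subset hpwP hm.hF
        · intro p hp q hq x hx hx'
          rcases Set.mem_insert_iff.1 hp with rfl | hp
          · exact hno x hx (Or.inl ⟨q, hq, hx'⟩)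
          · exact hm.hFdisj p hp q hq x hx hx'
        · intro p hp
          rcases Set.mem_insert_iff.1 hp with rfl | hp
          · rw [hpwf]
            rcases hwJv with h | h
            · exact Or.inr h
            · simp only [Set.mem_singleton_iff] at h
              exact Or.inl h
          · exact hm.hFfirst p hp
        · intro x hx x' hx'
          exfalso
          rw [hic] at hx hx'
          have h1 : x ∉ inis S m := fun hh => hx.2 (Or.inl hh)
          have h2 : x ≠ w := fun hh => hx.2 (Or.inr (by simp [hh]))
          exact h2 (hDw x hx.1 h1)
      have hle : cle m c' := ⟨fun q => optLE_refl _, Set.subset_insert _ _⟩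
      have hmem' : pw ∈ m.F := (hmax c' hsv hle).2 (Set.mem_insert pw m.F)
      exact hwni (Or.inr ⟨pw, hmem', hpwf⟩)
    · -- a first hit exists
      have hypw : pw.verts[i] ∈ pw.verts := List.getElem_mem hi
      rcases hyO with ⟨q₀, hq₀, hymem⟩ | ⟨pf, hpf, hypf⟩
      swap
      · -- hit a free path : impossible
        exfalso
        have hpfP : pf ∈ S.P := hm.hF hpf
        have hpfne : pf ≠ pw := by
          rintro rfl
          exact hwni (Or.inr ⟨pf, hpf, hpwf⟩)
        have := S.hP.2 pf hpfP pw hpwP hpfne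
        rw [Set.disjoint_left] at this
        exact this hypf hypw
      -- hit the current path at q₀
      cases ht : m.t q₀ with
      | none =>
          have hyq : pw.verts[i] ∈ q₀.verts := by
            have : mverts m q₀ = q₀.verts := by simp [mverts, ht]
            rwa [this] at hymem
          obtain ⟨k, hk, hyk⟩ := List.mem_iff_getElem.1 hyq
          have sh : ServeHyp S m q₀ pw i k :=
            ⟨hq₀, hpwP, hpwf ▸ hwni, hi,
             fun m' hmi hm' => hpre m' hm' hmi, hk, hyk, hymem, Or.inl ht⟩
          have hsv := upd_svalid hm.toSValid sh
          have hinis' := upd_inis hm.toSValid sh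
          have hmf : mfirst m q₀ = q₀.first := by simp [mfirst, ht]
          have hq₀J : q₀.first ∈ S.J := by
            rw [← S.hQJ]
            exact ⟨q₀, hq₀, rfl⟩
          have hq₀ne : q₀.first ≠ w := by
            intro hh
            exact hwni (Or.inl ⟨q₀, hq₀, by rw [hmf, hh]⟩)
          by_cases hu₀ : q₀.first ∈ S.I
          · -- the displaced vertex is in I : we can advance, contradiction
            exfalso
            have hfv : FValid S (upd m q₀ pw i k) := by
              refine { toSValid := hsv, howner := ?_, hFfirst := hm.hFfirst,
                       hkick := ?_, hdef := ?_ }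
              · intro q p j k' hq
                by_cases h : q = q₀
                · subst h
                  rw [upd_t_eq] at hq
                  obtain ⟨rfl, rfl, rfl⟩ : pw = p ∧ i = j ∧ k = k' := by simpa using hq
                  rw [hpwf]
                  rcases hwJv with h | h
                  · exact Or.inr h
                  · simp only [Set.mem_singleton_iff] at h
                    exact Or.inl h
                · exact hm.howner q p j k' (by rwa [upd_t_ne h] at hq)
              · intro q p j k' hq
                by_cases h : q = q₀
                · subst h
                  exact hu₀
                · exact hm.hkick q p j k' (by rwa [upd_t_ne h] at hq)
              · intro x hx x' hx'
                have key : ∀ z, z ∈ (S.J ∪ {S.v}) \ inis S (upd m q₀ pw i k) →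
                    z = q₀.first := by
                  rintro z ⟨hz1, hz2⟩
                  rw [hinis'] at hz2
                  simp only [Set.mem_insert_iff, Set.mem_diff,
                    Set.mem_singleton_iff, not_or, not_and, not_not] at hz2
                  obtain ⟨hzw, hz3⟩ := hz2
                  by_cases hzi : z ∈ inis S m
                  · rw [← hmf]
                    exact hz3 hzi
                  · exact absurd (hDw z hz1 hzi) (by rwa [hpwf] at hzw)
                rw [key x hx, key x' hx']
            have hle : cle m (upd m q₀ pw i k) := by
              refine ⟨fun q => ?_, subset_rfl⟩
              by_cases h : q = q₀
              · subst h
                rw [ht]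
                trivial
              · rw [upd_t_ne h]
                exact optLE_refl _
            have h2 := (hmax _ hfv hle).1 q₀
            rw [upd_t_eq, ht] at h2
            exact h2
          · -- success : q₀.first is the exchange vertex
            refine ⟨q₀.first, ⟨hq₀J, hu₀⟩, ?_⟩
            have hfinal : inis S (upd m q₀ pw i k) = (S.J ∪ {S.v}) \ {q₀.first} := by
              rw [hinis', hmf, hpwf, hinisEq]
              ext x
              simp only [Set.mem_insert_iff, Set.mem_diff, Set.mem_singleton_iff]
              constructor
              · rintro (rfl | ⟨⟨h1, h2⟩, h3⟩)
                · exact ⟨hwJv, hq₀ne.symm⟩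
                · exact ⟨h1, h3⟩
              · rintro ⟨h1, h2⟩
                by_cases hxw : x = w
                · exact Or.inl hxw
                · exact Or.inr ⟨⟨h1, hxw⟩, h2⟩
            rw [← hfinal]
            exact linkable_inis hsv
      | some val =>
          obtain ⟨p', j', k'⟩ := val
          exfalso
          -- the hit is on the tail part; advancing contradicts maximality
          have hp'P : p' ∈ S.P := hm.hmem q₀ p' j' k' ht
          have hp'ne : p' ≠ pw := by
            rintro rfl
            exact hwni (Or.inl ⟨q₀, hq₀, by simp [mfirst, ht, hpwf]⟩)
          have hynp' : pw.verts[i] ∉ p'.verts := by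
            intro hyp'
            have := S.hP.2 p' hp'P pw hpwP hp'ne
            rw [Set.disjoint_left] at this
            exact this hyp' hypw
          have hydrop : pw.verts[i] ∈ q₀.verts.drop (k'+1) := by
            have : mverts m q₀ = mlist p' q₀ j' k' := by simp [mverts, ht]
            rw [this] at hymem
            rcases mem_take_of_mlist hymem with h | h
            · exact absurd (List.take_sublist _ _ |>.subset h) hynp'
            · exact h
          obtain ⟨m₂, hm₂, heq2⟩ := List.mem_iff_getElem.1 hydrop
          rw [List.getElem_drop] at heq2
          have hm₂' : k' + 1 + m₂ < q₀.verts.length := by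
            have := List.length_drop (i := k'+1) (l := q₀.verts)
            omega
          have sh : ServeHyp S m q₀ pw i (k'+1+m₂) :=
            ⟨hq₀, hpwP, hpwf ▸ hwni, hi,
             fun m' hmi hm' => hpre m' hm' hmi, hm₂', heq2, hymem,
             Or.inr ⟨p', j', k', ht, by omega⟩⟩
          have hsv := upd_svalid hm.toSValid sh
          have hinis' := upd_inis hm.toSValid sh
          have hmf : mfirst m q₀ = p'.first := by simp [mfirst, ht]
          have hfv : FValid S (upd m q₀ pw i (k'+1+m₂)) := by
            refine { toSValid := hsv, howner := ?_, hFfirst := hm.hFfirst,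
                     hkick := ?_, hdef := ?_ }
            · intro q p j k'' hq
              by_cases h : q = q₀
              · subst h
                rw [upd_t_eq] at hq
                obtain ⟨rfl, rfl, rfl⟩ : pw = p ∧ i = j ∧ k'+1+m₂ = k'' := by simpa using hq
                rw [hpwf]
                rcases hwJv with h | h
                · exact Or.inr h
                · simp only [Set.mem_singleton_iff] at h
                  exact Or.inl h
              · exact hm.howner q p j k'' (by rwa [upd_t_ne h] at hq)
            · intro q p j k'' hq
              by_cases h : q = q₀
              · subst h
                exact hm.hkick q p' j' k' ht
              · exact hm.hkick q p j k'' (by rwa [upd_t_ne h] at hq)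
            · intro x hx x' hx'
              have key : ∀ z, z ∈ (S.J ∪ {S.v}) \ inis S (upd m q₀ pw i (k'+1+m₂)) →
                  z = p'.first := by
                rintro z ⟨hz1, hz2⟩
                rw [hinis'] at hz2
                simp only [Set.mem_insert_iff, Set.mem_diff,
                  Set.mem_singleton_iff, not_or, not_and, not_not] at hz2
                obtain ⟨hzw, hz3⟩ := hz2
                by_cases hzi : z ∈ inis S m
                · rw [← hmf]
                  exact hz3 hzi
                · exact absurd (hDw z hz1 hzi) (by rwa [hpwf] at hzw)
              rw [key x hx, key x' hx']
          have hle : cle m (upd m q₀ pw i (k'+1+m₂)) := by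
            refine ⟨fun q => ?_, subset_rfl⟩
            by_cases h : q = q₀
            · subst h
              rw [upd_t_eq, ht]
              exact Or.inl (show k' < k'+1+m₂ by omega)
            · rw [upd_t_ne h]
              exact optLE_refl _
          have h2 := (hmax _ hfv hle).1 q₀
          rw [upd_t_eq, ht] at h2
          simp only [optLE] at h2
          rcases h2 with h2 | h2
          · omega
          · have := congrArg (fun z => z.2.2) h2
            simp at this
            omega

end Exchange2


/-- The linkability system of any dimaze satisfies the exchange property (∗). -/
theorem linkability_exchange (D : V → V → Prop) (B0 : Set V) (hD : IsDimaze D B0)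
    (I J : Set V) (hI : Linkable D B0 I) (hJ : Linkable D B0 J)
    (hJI : (J \ I).Nonempty) (v : V) (hv : v ∈ I \ J) :
    ∃ u ∈ J \ I, Linkable D B0 (insert v (J \ {u})) := by
  classical
  obtain ⟨P, hP, hPI⟩ := hI
  obtain ⟨Q, hQ, hQJ⟩ := hJ
  let S : Exchange2.Setup D B0 := ⟨P, Q, I, J, v, hP, hQ, hPI, hQJ, hv.1, hv.2⟩
  obtain ⟨mx, hmx⟩ := exists_maximal_of_chains_bounded
    (r := Exchange2.crel S)
    (fun C hC => by
      rcases Set.eq_empty_or_nonempty C with rfl | hne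
      · exact ⟨⟨Exchange2.czero, Exchange2.czero_fvalid S⟩, by simp⟩
      · exact ⟨⟨Exchange2.supc S hC hne, Exchange2.supc_fvalid S hC hne⟩,
          fun a ha => Exchange2.supc_ub S hC hne ha⟩)
    (fun hab hbc => Exchange2.cle_trans hab hbc)
  have hmax : ∀ c' : Exchange2.Config D, Exchange2.FValid S c' →
      Exchange2.cle mx.1 c' → Exchange2.cle c' mx.1 := fun c' h hle => hmx ⟨c', h⟩ hle
  obtain ⟨u, huJI, hlink⟩ := Exchange2.max_success S mx.2 hmax hJI
  refine ⟨u, huJI, ?_⟩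
  have hvu : v ≠ u := fun h => hv.2 (h ▸ huJI.1)
  have hset : insert v (J \ {u}) = (J ∪ {v}) \ {u} := by
    ext x
    simp only [Set.mem_insert_iff, Set.mem_diff, Set.mem_union, Set.mem_singleton_iff]
    constructor
    · rintro (rfl | ⟨h1, h2⟩)
      · exact ⟨Or.inr rfl, hvu⟩
      · exact ⟨Or.inl h1, h2⟩
    · rintro ⟨h1 | h1, h2⟩
      · exact Or.inr ⟨h1, h2⟩
      · exact Or.inl h1
  rw [hset]
  exact hlink
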